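/- Pathwise stochastic Noether theorem: let ξ : ℝⁿ → ℝⁿ be continuously differentiable (the infinitesimal generator of a symmetry acting on configurations) and assume infinitesimal invariance of the Lagrangian and of the stochastic potentials: (∂L/∂q)(x,u)·ξ(x) + (∂L/∂v)(x,u)·(Dξ(x)u) = 0 for all (x,u) ∈ ℝⁿ × ℝⁿ, and (∂γ_i/∂q)(x)·ξ(x) = 0 for all x ∈ ℝⁿ and i = 1,…,m. If (q,v,p) satisfies the pathwise stochastic Hamilton–Pontryagin equations (q' = v, p = (∂L/∂v)(q,v), p ∈ C¹ with p' = (∂L/∂q)(q,v) + Σ_i (∂γ_i/∂q)(q) w_i'), then the momentum map t ↦ J(t) = ⟨p(t), ξ(q(t))⟩ is constant on [a,b]. -/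

import Mathlib

open scoped RealInnerProductSpace

/-- Pathwise stochastic Noether theorem: if the Lagrangian and the stochastic
potentials are infinitesimally invariant under the generator `ξ`, then along
any solution of the pathwise stochastic Hamilton–Pontryagin equations the
momentum map `t ↦ ⟨p(t), ξ(q(t))⟩` is constant on `[a,b]`. -/
theorem stochastic_noether
    (a b : ℝ) (hab : a < b) (n m : ℕ) (hn : 1 ≤ n)
    (L : EuclideanSpace ℝ (Fin n) × EuclideanSpace ℝ (Fin n) → ℝ)
    (hL : ContDiff ℝ 2 L)
    (γ : ℕ → EuclideanSpace ℝ (Fin n) → ℝ)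
    (hγ : ∀ i < m, ContDiff ℝ 2 (γ i))
    (w w' : ℕ → ℝ → ℝ)
    (hw : ∀ i < m, ∀ t ∈ Set.Icc a b, HasDerivWithinAt (w i) (w' i t) (Set.Icc a b) t)
    (hw' : ∀ i < m, ContinuousOn (w' i) (Set.Icc a b))
    (ξ : EuclideanSpace ℝ (Fin n) → EuclideanSpace ℝ (Fin n))
    (hξ : ContDiff ℝ 1 ξ)
    -- infinitesimal invariance of the Lagrangian
    (hinvL : ∀ x u : EuclideanSpace ℝ (Fin n),
        ⟪gradient (fun x' => L (x', u)) x, ξ x⟫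
          + ⟪gradient (fun u' => L (x, u')) u, fderiv ℝ ξ x u⟫ = 0)
    -- infinitesimal invariance of the stochastic potentials
    (hinvγ : ∀ i < m, ∀ x : EuclideanSpace ℝ (Fin n),
        ⟪gradient (γ i) x, ξ x⟫ = 0)
    (q q' v p p' : ℝ → EuclideanSpace ℝ (Fin n))
    (hq : ∀ t ∈ Set.Icc a b, HasDerivWithinAt q (q' t) (Set.Icc a b) t)
    (hq' : ContinuousOn q' (Set.Icc a b))
    (hv : ContinuousOn v (Set.Icc a b))
    (hp : ∀ t ∈ Set.Icc a b, HasDerivWithinAt p (p' t) (Set.Icc a b) t)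
    (hp' : ContinuousOn p' (Set.Icc a b))
    -- the pathwise stochastic Hamilton–Pontryagin equations
    (heq1 : ∀ t ∈ Set.Icc a b, q' t = v t)
    (heq2 : ∀ t ∈ Set.Icc a b, p t = gradient (fun u => L (q t, u)) (v t))
    (heq3 : ∀ t ∈ Set.Icc a b,
        p' t = gradient (fun x => L (x, v t)) (q t)
          + ∑ i ∈ Finset.range m, w' i t • gradient (γ i) (q t)) :
    ∀ t ∈ Set.Icc a b, ⟪p t, ξ (q t)⟫ = ⟪p a, ξ (q a)⟫ := by
  have key : ∀ t ∈ Set.Icc a b,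
      HasDerivWithinAt (fun s => ⟪p s, ξ (q s)⟫) 0 (Set.Icc a b) t := by
    intro t ht
    have hξd : HasFDerivAt ξ (fderiv ℝ ξ (q t)) (q t) :=
      (hξ.differentiable one_ne_zero (q t)).hasFDerivAt
    have hqc : HasDerivWithinAt (fun s => ξ (q s)) (fderiv ℝ ξ (q t) (q' t))
        (Set.Icc a b) t := hξd.comp_hasDerivWithinAt t (hq t ht)
    have h := (hp t ht).inner ℝ hqc
    have hz : ⟪p t, fderiv ℝ ξ (q t) (q' t)⟫ + ⟪p' t, ξ (q t)⟫ = 0 := by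
      rw [heq1 t ht, heq2 t ht, heq3 t ht, inner_add_left, sum_inner]
      have hγz : ∀ i ∈ Finset.range m,
          ⟪w' i t • gradient (γ i) (q t), ξ (q t)⟫ = 0 := by
        intro i hi
        rw [real_inner_smul_left, hinvγ i (Finset.mem_range.mp hi) (q t), mul_zero]
      rw [Finset.sum_eq_zero hγz, add_zero]
      have := hinvL (q t) (v t)
      linarith
    rw [hz] at h
    exact h
  intro t ht
  exact constant_of_has_deriv_right_zero
    (fun s hs => (key s hs).continuousWithinAt)
    (fun s hs => ((key s (Set.mem_Icc_of_Ico hs)).mono_of_mem_nhdsWithin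
      (Icc_mem_nhdsGE_of_mem hs))) t ht
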